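/- The Hochschild–Kostant–Rosenberg map φ_HKR(ξ₁∧...∧ξ_k)(f₁⊗...⊗f_k) = (1/k!)·Alt_{ξ₁,...,ξ_k} ξ₁(f₁)···ξ_k(f_k) is a morphism of complexes from polyvector fields (with zero differential) to the Hochschild complex of polydifferential operators: for every polyvector field γ, d_Hoch(φ_HKR(γ)) = 0, i.e. φ_HKR(γ) is a Hochschild cocycle. -/

import Mathlib

/- STATEMENT 13: the Hochschild–Kostant–Rosenberg map
φ_HKR(ξ₁∧...∧ξ_k)(f₁⊗...⊗f_k) = (1/k!)·Alt_{ξ₁,...,ξ_k} ξ₁(f₁)···ξ_k(f_k)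
takes polyvector fields to Hochschild cocycles: d_Hoch(φ_HKR(γ)) = 0.
Here A = ℂ[x₁,...,x_d]; a vector field ξ is a d-tuple of polynomials acting by
ξ(f) = Σ_j ξ_j ∂f/∂x_j, and polyvector fields are spanned by decomposables
ξ₁∧...∧ξ_k, on which φ_HKR is defined. -/

open MvPolynomial

def dHoch {A : Type*} [Ring A] (k : ℕ) (φ : (Fin k → A) → A) :
    (Fin (k + 1) → A) → A := fun a =>
  a 0 * φ (fun i => a i.succ)
    + ∑ i : Fin k, (-1 : A) ^ (i.1 + 1) *
        φ (fun j => if j.1 < i.1 then a ⟨j.1, by have := j.2; omega⟩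
            else if j.1 = i.1 then a ⟨i.1, by have := i.2; omega⟩ * a ⟨i.1 + 1, by have := i.2; omega⟩
            else a ⟨j.1 + 1, by have := j.2; omega⟩)
    + (-1 : A) ^ (k + 1) * (φ (fun i => a i.castSucc) * a (Fin.last k))

/-- The action of the vector field `ξ = Σ ξ_j ∂/∂x_j` on a polynomial. -/
noncomputable def act {d : ℕ} (ξ : Fin d → MvPolynomial (Fin d) ℂ)
    (f : MvPolynomial (Fin d) ℂ) : MvPolynomial (Fin d) ℂ :=
  ∑ j : Fin d, ξ j * MvPolynomial.pderiv j f

/-- The Hochschild–Kostant–Rosenberg map on the decomposable polyvector field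
`ξ₁ ∧ ... ∧ ξ_k`. -/
noncomputable def hkr {d k : ℕ} (ξ : Fin k → (Fin d → MvPolynomial (Fin d) ℂ)) :
    (Fin k → MvPolynomial (Fin d) ℂ) → MvPolynomial (Fin d) ℂ := fun f =>
  ((k.factorial : ℂ))⁻¹ •
    ∑ σ : Equiv.Perm (Fin k), (Equiv.Perm.sign σ : ℤ) • ∏ i : Fin k, act (ξ (σ i)) (f i)

lemma act_mul {d : ℕ} (ξ : Fin d → MvPolynomial (Fin d) ℂ)
    (f g : MvPolynomial (Fin d) ℂ) :
    act ξ (f * g) = act ξ f * g + f * act ξ g := by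
  unfold act
  simp only [pderiv_mul, mul_add]
  rw [Finset.sum_add_distrib, Finset.sum_mul, Finset.mul_sum]
  congr 1
  · exact Finset.sum_congr rfl fun j _ => by ring
  · exact Finset.sum_congr rfl fun j _ => by ring

lemma key {A : Type*} [CommRing A] (k : ℕ) (D : ℕ → A → A)
    (hD : ∀ j < k, ∀ x y : A, D j (x * y) = D j x * y + x * D j y) (a : ℕ → A) :
    a 0 * ∏ j ∈ Finset.range k, D j (a (j + 1))
      + ∑ i ∈ Finset.range k, (-1 : A) ^ (i + 1) *
          ∏ j ∈ Finset.range k,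
            D j (if j < i then a j else if j = i then a i * a (i + 1) else a (j + 1))
      + (-1 : A) ^ (k + 1) * ((∏ j ∈ Finset.range k, D j (a j)) * a k) = 0 := by
  set V : ℕ → A := fun m =>
    a m * ∏ j ∈ Finset.range k, (if j < m then D j (a j) else D j (a (j + 1))) with hV
  have h0 : V 0 = a 0 * ∏ j ∈ Finset.range k, D j (a (j + 1)) := by simp [V]
  have hk : V k = a k * ∏ j ∈ Finset.range k, D j (a j) := by
    simp only [V]
    congr 1
    exact Finset.prod_congr rfl fun j hj => by rw [if_pos (Finset.mem_range.mp hj)]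
  have hstep : ∀ i ∈ Finset.range k,
      (-1 : A) ^ (i + 1) *
        ∏ j ∈ Finset.range k,
          D j (if j < i then a j else if j = i then a i * a (i + 1) else a (j + 1))
      = (-1 : A) ^ (i + 1) * V (i + 1) - (-1 : A) ^ i * V i := by
    intro i hi
    have hik := Finset.mem_range.mp hi
    set R : A := ∏ j ∈ (Finset.range k).erase i,
      (if j < i then D j (a j) else D j (a (j + 1))) with hR
    have hA1 : ∏ j ∈ Finset.range k,
        D j (if j < i then a j else if j = i then a i * a (i + 1) else a (j + 1))
        = D i (a i * a (i + 1)) * R := by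
      rw [← Finset.mul_prod_erase _ _ hi]
      congr 1
      · simp
      · exact Finset.prod_congr rfl fun j hj => by
          have hji := Finset.ne_of_mem_erase hj
          by_cases h : j < i <;> simp [h, hji]
    have hA2 : V (i + 1) = a (i + 1) * (D i (a i) * R) := by
      simp only [V]
      rw [← Finset.mul_prod_erase _ _ hi]
      have h1 : (if i < i + 1 then D i (a i) else D i (a (i + 1))) = D i (a i) := by simp
      rw [h1]
      congr 2
      refine Finset.prod_congr rfl fun j hj => ?_
      have hji := Finset.ne_of_mem_erase hj
      have h2 : (j < i + 1) ↔ (j < i) := by omega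
      simp [h2]
    have hA3 : V i = a i * (D i (a (i + 1)) * R) := by
      simp only [V]
      rw [← Finset.mul_prod_erase _ _ hi]
      simp [hR]
    rw [hA1, hA2, hA3, hD i hik]
    ring
  rw [Finset.sum_congr rfl hstep,
    Finset.sum_range_sub (fun i => (-1 : A) ^ i * V i) k, ← h0]
  have hk' : (∏ j ∈ Finset.range k, D j (a j)) * a k = V k := by rw [hk]; ring
  rw [hk']
  ring

lemma keyFin {A : Type*} [CommRing A] (k : ℕ) (D : Fin k → A → A)
    (hD : ∀ (j : Fin k) (x y : A), D j (x * y) = D j x * y + x * D j y)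
    (a : Fin (k + 1) → A) :
    dHoch k (fun f => ∏ i, D i (f i)) a = 0 := by
  classical
  set D' : ℕ → A → A := fun n => if h : n < k then D ⟨n, h⟩ else id with hD'
  set a' : ℕ → A := fun n => if h : n < k + 1 then a ⟨n, h⟩ else 0 with ha'
  have hDa : ∀ (j : Fin k) (x : A), D' j.1 x = D j x := by
    intro j x; simp [D', j.2]
  have haa : ∀ (n : ℕ) (h : n < k + 1), a' n = a ⟨n, h⟩ := by
    intro n h; show (if h : n < k + 1 then a ⟨n, h⟩ else 0) = _; rw [dif_pos h]
  have hconv : dHoch k (fun f => ∏ i, D i (f i)) a =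
      a' 0 * ∏ j ∈ Finset.range k, D' j (a' (j + 1))
      + ∑ i ∈ Finset.range k, (-1 : A) ^ (i + 1) *
          ∏ j ∈ Finset.range k,
            D' j (if j < i then a' j else if j = i then a' i * a' (i + 1) else a' (j + 1))
      + (-1 : A) ^ (k + 1) * ((∏ j ∈ Finset.range k, D' j (a' j)) * a' k) := by
    unfold dHoch
    congr 1
    congr 1
    · -- first term
      rw [← Fin.prod_univ_eq_prod_range (fun n => D' n (a' (n + 1))) k]
      congr 1
      refine Finset.prod_congr rfl fun i _ => ?_
      rw [haa (i.1 + 1) (by omega), hDa]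
      rfl
    · -- middle sum
      rw [← Fin.sum_univ_eq_sum_range (fun n => (-1 : A) ^ (n + 1) *
          ∏ j ∈ Finset.range k,
            D' j (if j < n then a' j else if j = n then a' n * a' (n + 1) else a' (j + 1))) k]
      refine Finset.sum_congr rfl fun i _ => ?_
      congr 1
      rw [← Fin.prod_univ_eq_prod_range (fun n =>
          D' n (if n < i.1 then a' n else if n = i.1 then a' i.1 * a' (i.1 + 1) else a' (n + 1))) k]
      refine Finset.prod_congr rfl fun j _ => ?_
      rw [hDa]
      congr 1
      by_cases h1 : j.1 < i.1
      · simp only [h1, if_true]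
        rw [haa j.1 (by omega)]
      · by_cases h2 : j.1 = i.1
        · simp only [h1, if_false, h2, if_true]
          rw [haa i.1 (by omega), haa (i.1 + 1) (by omega)]
        · simp only [h1, if_false, h2]
          rw [haa (j.1 + 1) (by omega)]
    · -- last term
      congr 1
      congr 1
      · rw [← Fin.prod_univ_eq_prod_range (fun n => D' n (a' n)) k]
        refine Finset.prod_congr rfl fun i _ => ?_
        rw [hDa, haa i.1 (by omega)]
        rfl
      · rw [haa k (by omega)]
        rfl
  rw [hconv]
  exact key k D' (fun j hj x y => by simp only [D', dif_pos hj]; exact hD ⟨j, hj⟩ x y) a'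

lemma dHoch_smul {A : Type*} [CommRing A] {R : Type*} [Monoid R] [DistribMulAction R A]
    [SMulCommClass R A A] [IsScalarTower R A A] (k : ℕ) (c : R)
    (φ : (Fin k → A) → A) (a : Fin (k + 1) → A) :
    dHoch k (fun f => c • φ f) a = c • dHoch k φ a := by
  unfold dHoch
  simp only [mul_smul_comm, smul_mul_assoc, ← Finset.smul_sum, smul_add]

lemma dHoch_sum {A : Type*} [CommRing A] {ι : Type*} (s : Finset ι) (k : ℕ)
    (φ : ι → (Fin k → A) → A) (a : Fin (k + 1) → A) :
    dHoch k (fun f => ∑ σ ∈ s, φ σ f) a = ∑ σ ∈ s, dHoch k (φ σ) a := by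
  unfold dHoch
  rw [Finset.sum_add_distrib, Finset.sum_add_distrib]
  congr 1
  congr 1
  · rw [Finset.mul_sum]
  · rw [Finset.sum_comm]
    exact Finset.sum_congr rfl fun i _ => by rw [Finset.mul_sum]
  · rw [Finset.sum_mul, Finset.mul_sum]

/-- `φ_HKR(γ)` is a Hochschild cocycle. -/
theorem hkr_is_cocycle (d k : ℕ) (ξ : Fin k → (Fin d → MvPolynomial (Fin d) ℂ)) :
    ∀ a : Fin (k + 1) → MvPolynomial (Fin d) ℂ, dHoch k (hkr ξ) a = 0 := by
  intro a
  unfold hkr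
  rw [dHoch_smul, dHoch_sum]
  have h : ∀ σ ∈ (Finset.univ : Finset (Equiv.Perm (Fin k))),
      dHoch k (fun f => ((Equiv.Perm.sign σ : ℤ)) • ∏ i : Fin k, act (ξ (σ i)) (f i)) a
        = 0 := by
    intro σ _
    rw [dHoch_smul, keyFin k (fun i => act (ξ (σ i))) (fun j x y => act_mul _ x y) a]
    simp
  rw [Finset.sum_congr rfl h]
  simp
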